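/- For every real number q ≥ 0, the 4×4 real matrix A = [[−1, 0, q, 2q], [−1, −1, 0, 0], [−1, −1, −1, 0], [−1, −1, −1, −1]] is D-stable. -/
import Mathlib


open Matrix

/-- A real matrix is Hurwitz stable if every complex eigenvalue has negative real part. -/
def IsHurwitzStable {m : ℕ} (A : Matrix (Fin m) (Fin m) ℝ) : Prop :=
  ∀ μ ∈ spectrum ℂ (A.map (Complex.ofReal : ℝ → ℂ)), μ.re < 0

/-- A real matrix is D-stable if `D * A` is Hurwitz stable for every positive diagonal `D`. -/
def IsDStable {m : ℕ} (A : Matrix (Fin m) (Fin m) ℝ) : Prop :=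
  ∀ d : Fin m → ℝ, (∀ i, 0 < d i) → IsHurwitzStable (Matrix.diagonal d * A)

theorem my_det_fin_four {R : Type*} [CommRing R] (A : Matrix (Fin 4) (Fin 4) R) :
    det A =
      A 0 0*A 1 1*A 2 2*A 3 3
      - A 0 0*A 1 1*A 2 3*A 3 2
      - A 0 0*A 1 2*A 2 1*A 3 3
      + A 0 0*A 1 2*A 2 3*A 3 1
      + A 0 0*A 1 3*A 2 1*A 3 2
      - A 0 0*A 1 3*A 2 2*A 3 1
      - A 0 1*A 1 0*A 2 2*A 3 3
      + A 0 1*A 1 0*A 2 3*A 3 2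
      + A 0 1*A 1 2*A 2 0*A 3 3
      - A 0 1*A 1 2*A 2 3*A 3 0
      - A 0 1*A 1 3*A 2 0*A 3 2
      + A 0 1*A 1 3*A 2 2*A 3 0
      + A 0 2*A 1 0*A 2 1*A 3 3
      - A 0 2*A 1 0*A 2 3*A 3 1
      - A 0 2*A 1 1*A 2 0*A 3 3
      + A 0 2*A 1 1*A 2 3*A 3 0
      + A 0 2*A 1 3*A 2 0*A 3 1
      - A 0 2*A 1 3*A 2 1*A 3 0
      - A 0 3*A 1 0*A 2 1*A 3 2
      + A 0 3*A 1 0*A 2 2*A 3 1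
      + A 0 3*A 1 1*A 2 0*A 3 2
      - A 0 3*A 1 1*A 2 2*A 3 0
      - A 0 3*A 1 2*A 2 0*A 3 1
      + A 0 3*A 1 2*A 2 1*A 3 0
 := by
  rw [show A = !![A 0 0, A 0 1, A 0 2, A 0 3; A 1 0, A 1 1, A 1 2, A 1 3; A 2 0, A 2 1, A 2 2, A 2 3; A 3 0, A 3 1, A 3 2, A 3 3] from by ext i j; fin_cases i <;> fin_cases j <;> rfl]
  rw [Matrix.det_succ_row_zero, Fin.sum_univ_four]
  simp [Matrix.det_fin_three, Fin.succAbove, Matrix.submatrix_apply, Fin.lt_def, Fin.castSucc, Fin.castAdd, Fin.castLE, Fin.succ, show ((3:Fin 4):ℕ) = 3 from rfl]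
  ring

set_option maxHeartbeats 4000000 in
set_option maxRecDepth 10000 in
lemma delta_pos (d0 d1 d2 d3 q : ℝ) (h0 : 0 < d0) (h1 : 0 < d1) (h2 : 0 < d2) (h3 : 0 < d3)
    (hq : 0 ≤ q) :
    (d0*d1*d2 + d0*d1*d3 + d1*d2*d3 + (1+q)*(d0*d2*d3))^2
      + (d0+d1+d2+d3)^2*(d0*d1*d2*d3)
      < (d0+d1+d2+d3)*(d0*d1 + d1*d2 + d1*d3 + d2*d3 + (1+q)*(d0*d2) + (1+2*q)*(d0*d3))
        *(d0*d1*d2 + d0*d1*d3 + d1*d2*d3 + (1+q)*(d0*d2*d3)) := by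
  have hq0 : (0:ℝ) ≤ q^2 := sq_nonneg q
  have m0 : (0:ℝ) ≤ d1*d2^2*d3^3 := mul_nonneg (mul_nonneg (h1.le) (pow_nonneg h2.le 2)) (pow_nonneg h3.le 3)
  have m1 : (0:ℝ) ≤ d1*d2^3*d3^2 := mul_nonneg (mul_nonneg (h1.le) (pow_nonneg h2.le 3)) (pow_nonneg h3.le 2)
  have m2 : (0:ℝ) ≤ d1^2*d2*d3^3 := mul_nonneg (mul_nonneg (pow_nonneg h1.le 2) (h2.le)) (pow_nonneg h3.le 3)
  have m3 : (0:ℝ) ≤ d1^2*d2^2*d3^2 := mul_nonneg (mul_nonneg (pow_nonneg h1.le 2) (pow_nonneg h2.le 2)) (pow_nonneg h3.le 2)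
  have m4 : (0:ℝ) ≤ d1^2*d2^3*d3 := mul_nonneg (mul_nonneg (pow_nonneg h1.le 2) (pow_nonneg h2.le 3)) (h3.le)
  have m5 : (0:ℝ) ≤ d1^3*d2*d3^2 := mul_nonneg (mul_nonneg (pow_nonneg h1.le 3) (h2.le)) (pow_nonneg h3.le 2)
  have m6 : (0:ℝ) ≤ d1^3*d2^2*d3 := mul_nonneg (mul_nonneg (pow_nonneg h1.le 3) (pow_nonneg h2.le 2)) (h3.le)
  have m7 : (0:ℝ) ≤ d0*d2^2*d3^3 := mul_nonneg (mul_nonneg (h0.le) (pow_nonneg h2.le 2)) (pow_nonneg h3.le 3)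
  have m8 : (0:ℝ) ≤ d0*d2^2*d3^3*q := mul_nonneg (mul_nonneg (mul_nonneg (h0.le) (pow_nonneg h2.le 2)) (pow_nonneg h3.le 3)) (hq)
  have m9 : (0:ℝ) ≤ d0*d2^3*d3^2 := mul_nonneg (mul_nonneg (h0.le) (pow_nonneg h2.le 3)) (pow_nonneg h3.le 2)
  have m10 : (0:ℝ) ≤ d0*d2^3*d3^2*q := mul_nonneg (mul_nonneg (mul_nonneg (h0.le) (pow_nonneg h2.le 3)) (pow_nonneg h3.le 2)) (hq)
  have m11 : (0:ℝ) ≤ d0*d1*d2*d3^3 := mul_nonneg (mul_nonneg (mul_nonneg (h0.le) (h1.le)) (h2.le)) (pow_nonneg h3.le 3)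
  have m12 : (0:ℝ) ≤ d0*d1*d2*d3^3*q := mul_nonneg (mul_nonneg (mul_nonneg (mul_nonneg (h0.le) (h1.le)) (h2.le)) (pow_nonneg h3.le 3)) (hq)
  have m13 : (0:ℝ) ≤ d0*d1*d2^2*d3^2 := mul_nonneg (mul_nonneg (mul_nonneg (h0.le) (h1.le)) (pow_nonneg h2.le 2)) (pow_nonneg h3.le 2)
  have m14 : (0:ℝ) ≤ d0*d1*d2^2*d3^2*q := mul_nonneg (mul_nonneg (mul_nonneg (mul_nonneg (h0.le) (h1.le)) (pow_nonneg h2.le 2)) (pow_nonneg h3.le 2)) (hq)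
  have m15 : (0:ℝ) ≤ d0*d1*d2^3*d3 := mul_nonneg (mul_nonneg (mul_nonneg (h0.le) (h1.le)) (pow_nonneg h2.le 3)) (h3.le)
  have m16 : (0:ℝ) ≤ d0*d1*d2^3*d3*q := mul_nonneg (mul_nonneg (mul_nonneg (mul_nonneg (h0.le) (h1.le)) (pow_nonneg h2.le 3)) (h3.le)) (hq)
  have m17 : (0:ℝ) ≤ d0*d1^2*d3^3 := mul_nonneg (mul_nonneg (h0.le) (pow_nonneg h1.le 2)) (pow_nonneg h3.le 3)
  have m18 : (0:ℝ) ≤ d0*d1^2*d2*d3^2 := mul_nonneg (mul_nonneg (mul_nonneg (h0.le) (pow_nonneg h1.le 2)) (h2.le)) (pow_nonneg h3.le 2)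
  have m19 : (0:ℝ) ≤ d0*d1^2*d2*d3^2*q := mul_nonneg (mul_nonneg (mul_nonneg (mul_nonneg (h0.le) (pow_nonneg h1.le 2)) (h2.le)) (pow_nonneg h3.le 2)) (hq)
  have m20 : (0:ℝ) ≤ d0*d1^2*d2^2*d3 := mul_nonneg (mul_nonneg (mul_nonneg (h0.le) (pow_nonneg h1.le 2)) (pow_nonneg h2.le 2)) (h3.le)
  have m21 : (0:ℝ) ≤ d0*d1^2*d2^2*d3*q := mul_nonneg (mul_nonneg (mul_nonneg (mul_nonneg (h0.le) (pow_nonneg h1.le 2)) (pow_nonneg h2.le 2)) (h3.le)) (hq)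
  have m22 : (0:ℝ) ≤ d0*d1^2*d2^3 := mul_nonneg (mul_nonneg (h0.le) (pow_nonneg h1.le 2)) (pow_nonneg h2.le 3)
  have m23 : (0:ℝ) ≤ d0*d1^3*d3^2 := mul_nonneg (mul_nonneg (h0.le) (pow_nonneg h1.le 3)) (pow_nonneg h3.le 2)
  have m24 : (0:ℝ) ≤ d0*d1^3*d2*d3 := mul_nonneg (mul_nonneg (mul_nonneg (h0.le) (pow_nonneg h1.le 3)) (h2.le)) (h3.le)
  have m25 : (0:ℝ) ≤ d0*d1^3*d2^2 := mul_nonneg (mul_nonneg (h0.le) (pow_nonneg h1.le 3)) (pow_nonneg h2.le 2)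
  have m26 : (0:ℝ) ≤ d0^2*d2*d3^3 := mul_nonneg (mul_nonneg (pow_nonneg h0.le 2) (h2.le)) (pow_nonneg h3.le 3)
  have m27 : (0:ℝ) ≤ d0^2*d2*d3^3*q := mul_nonneg (mul_nonneg (mul_nonneg (pow_nonneg h0.le 2) (h2.le)) (pow_nonneg h3.le 3)) (hq)
  have m28 : (0:ℝ) ≤ d0^2*d2*d3^3*q^2 := mul_nonneg (mul_nonneg (mul_nonneg (pow_nonneg h0.le 2) (h2.le)) (pow_nonneg h3.le 3)) (pow_nonneg hq 2)
  have m29 : (0:ℝ) ≤ d0^2*d2^2*d3^2 := mul_nonneg (mul_nonneg (pow_nonneg h0.le 2) (pow_nonneg h2.le 2)) (pow_nonneg h3.le 2)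
  have m30 : (0:ℝ) ≤ d0^2*d2^2*d3^2*q := mul_nonneg (mul_nonneg (mul_nonneg (pow_nonneg h0.le 2) (pow_nonneg h2.le 2)) (pow_nonneg h3.le 2)) (hq)
  have m31 : (0:ℝ) ≤ d0^2*d2^2*d3^2*q^2 := mul_nonneg (mul_nonneg (mul_nonneg (pow_nonneg h0.le 2) (pow_nonneg h2.le 2)) (pow_nonneg h3.le 2)) (pow_nonneg hq 2)
  have m32 : (0:ℝ) ≤ d0^2*d2^3*d3 := mul_nonneg (mul_nonneg (pow_nonneg h0.le 2) (pow_nonneg h2.le 3)) (h3.le)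
  have m33 : (0:ℝ) ≤ d0^2*d2^3*d3*q := mul_nonneg (mul_nonneg (mul_nonneg (pow_nonneg h0.le 2) (pow_nonneg h2.le 3)) (h3.le)) (hq)
  have m34 : (0:ℝ) ≤ d0^2*d2^3*d3*q^2 := mul_nonneg (mul_nonneg (mul_nonneg (pow_nonneg h0.le 2) (pow_nonneg h2.le 3)) (h3.le)) (pow_nonneg hq 2)
  have m35 : (0:ℝ) ≤ d0^2*d1*d3^3 := mul_nonneg (mul_nonneg (pow_nonneg h0.le 2) (h1.le)) (pow_nonneg h3.le 3)
  have m36 : (0:ℝ) ≤ d0^2*d1*d3^3*q := mul_nonneg (mul_nonneg (mul_nonneg (pow_nonneg h0.le 2) (h1.le)) (pow_nonneg h3.le 3)) (hq)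
  have m37 : (0:ℝ) ≤ d0^2*d1*d2*d3^2 := mul_nonneg (mul_nonneg (mul_nonneg (pow_nonneg h0.le 2) (h1.le)) (h2.le)) (pow_nonneg h3.le 2)
  have m38 : (0:ℝ) ≤ d0^2*d1*d2*d3^2*q := mul_nonneg (mul_nonneg (mul_nonneg (mul_nonneg (pow_nonneg h0.le 2) (h1.le)) (h2.le)) (pow_nonneg h3.le 2)) (hq)
  have m39 : (0:ℝ) ≤ d0^2*d1*d2*d3^2*q^2 := mul_nonneg (mul_nonneg (mul_nonneg (mul_nonneg (pow_nonneg h0.le 2) (h1.le)) (h2.le)) (pow_nonneg h3.le 2)) (pow_nonneg hq 2)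
  have m40 : (0:ℝ) ≤ d0^2*d1*d2^2*d3 := mul_nonneg (mul_nonneg (mul_nonneg (pow_nonneg h0.le 2) (h1.le)) (pow_nonneg h2.le 2)) (h3.le)
  have m41 : (0:ℝ) ≤ d0^2*d1*d2^2*d3*q := mul_nonneg (mul_nonneg (mul_nonneg (mul_nonneg (pow_nonneg h0.le 2) (h1.le)) (pow_nonneg h2.le 2)) (h3.le)) (hq)
  have m42 : (0:ℝ) ≤ d0^2*d1*d2^2*d3*q^2 := mul_nonneg (mul_nonneg (mul_nonneg (mul_nonneg (pow_nonneg h0.le 2) (h1.le)) (pow_nonneg h2.le 2)) (h3.le)) (pow_nonneg hq 2)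
  have m43 : (0:ℝ) ≤ d0^2*d1*d2^3 := mul_nonneg (mul_nonneg (pow_nonneg h0.le 2) (h1.le)) (pow_nonneg h2.le 3)
  have m44 : (0:ℝ) ≤ d0^2*d1*d2^3*q := mul_nonneg (mul_nonneg (mul_nonneg (pow_nonneg h0.le 2) (h1.le)) (pow_nonneg h2.le 3)) (hq)
  have m45 : (0:ℝ) ≤ d0^2*d1^2*d3^2 := mul_nonneg (mul_nonneg (pow_nonneg h0.le 2) (pow_nonneg h1.le 2)) (pow_nonneg h3.le 2)
  have m46 : (0:ℝ) ≤ d0^2*d1^2*d3^2*q := mul_nonneg (mul_nonneg (mul_nonneg (pow_nonneg h0.le 2) (pow_nonneg h1.le 2)) (pow_nonneg h3.le 2)) (hq)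
  have m47 : (0:ℝ) ≤ d0^2*d1^2*d2*d3 := mul_nonneg (mul_nonneg (mul_nonneg (pow_nonneg h0.le 2) (pow_nonneg h1.le 2)) (h2.le)) (h3.le)
  have m48 : (0:ℝ) ≤ d0^2*d1^2*d2*d3*q := mul_nonneg (mul_nonneg (mul_nonneg (mul_nonneg (pow_nonneg h0.le 2) (pow_nonneg h1.le 2)) (h2.le)) (h3.le)) (hq)
  have m49 : (0:ℝ) ≤ d0^2*d1^2*d2^2 := mul_nonneg (mul_nonneg (pow_nonneg h0.le 2) (pow_nonneg h1.le 2)) (pow_nonneg h2.le 2)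
  have m50 : (0:ℝ) ≤ d0^2*d1^2*d2^2*q := mul_nonneg (mul_nonneg (mul_nonneg (pow_nonneg h0.le 2) (pow_nonneg h1.le 2)) (pow_nonneg h2.le 2)) (hq)
  have m51 : (0:ℝ) ≤ d0^2*d1^3*d3 := mul_nonneg (mul_nonneg (pow_nonneg h0.le 2) (pow_nonneg h1.le 3)) (h3.le)
  have m52 : (0:ℝ) ≤ d0^2*d1^3*d2 := mul_nonneg (mul_nonneg (pow_nonneg h0.le 2) (pow_nonneg h1.le 3)) (h2.le)
  have m53 : (0:ℝ) ≤ d0^3*d2*d3^2 := mul_nonneg (mul_nonneg (pow_nonneg h0.le 3) (h2.le)) (pow_nonneg h3.le 2)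
  have m54 : (0:ℝ) ≤ d0^3*d2*d3^2*q := mul_nonneg (mul_nonneg (mul_nonneg (pow_nonneg h0.le 3) (h2.le)) (pow_nonneg h3.le 2)) (hq)
  have m55 : (0:ℝ) ≤ d0^3*d2*d3^2*q^2 := mul_nonneg (mul_nonneg (mul_nonneg (pow_nonneg h0.le 3) (h2.le)) (pow_nonneg h3.le 2)) (pow_nonneg hq 2)
  have m56 : (0:ℝ) ≤ d0^3*d2^2*d3 := mul_nonneg (mul_nonneg (pow_nonneg h0.le 3) (pow_nonneg h2.le 2)) (h3.le)
  have m57 : (0:ℝ) ≤ d0^3*d2^2*d3*q := mul_nonneg (mul_nonneg (mul_nonneg (pow_nonneg h0.le 3) (pow_nonneg h2.le 2)) (h3.le)) (hq)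
  have m58 : (0:ℝ) ≤ d0^3*d2^2*d3*q^2 := mul_nonneg (mul_nonneg (mul_nonneg (pow_nonneg h0.le 3) (pow_nonneg h2.le 2)) (h3.le)) (pow_nonneg hq 2)
  have m59 : (0:ℝ) ≤ d0^3*d1*d3^2 := mul_nonneg (mul_nonneg (pow_nonneg h0.le 3) (h1.le)) (pow_nonneg h3.le 2)
  have m60 : (0:ℝ) ≤ d0^3*d1*d3^2*q := mul_nonneg (mul_nonneg (mul_nonneg (pow_nonneg h0.le 3) (h1.le)) (pow_nonneg h3.le 2)) (hq)
  have m61 : (0:ℝ) ≤ d0^3*d1*d2*d3 := mul_nonneg (mul_nonneg (mul_nonneg (pow_nonneg h0.le 3) (h1.le)) (h2.le)) (h3.le)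
  have m62 : (0:ℝ) ≤ d0^3*d1*d2*d3*q := mul_nonneg (mul_nonneg (mul_nonneg (mul_nonneg (pow_nonneg h0.le 3) (h1.le)) (h2.le)) (h3.le)) (hq)
  have m63 : (0:ℝ) ≤ d0^3*d1*d2^2 := mul_nonneg (mul_nonneg (pow_nonneg h0.le 3) (h1.le)) (pow_nonneg h2.le 2)
  have m64 : (0:ℝ) ≤ d0^3*d1*d2^2*q := mul_nonneg (mul_nonneg (mul_nonneg (pow_nonneg h0.le 3) (h1.le)) (pow_nonneg h2.le 2)) (hq)
  have m65 : (0:ℝ) ≤ d0^3*d1^2*d3 := mul_nonneg (mul_nonneg (pow_nonneg h0.le 3) (pow_nonneg h1.le 2)) (h3.le)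
  have m66 : (0:ℝ) ≤ d0^3*d1^2*d2 := mul_nonneg (mul_nonneg (pow_nonneg h0.le 3) (pow_nonneg h1.le 2)) (h2.le)
  have ms : (0:ℝ) < d0^3*d1^2*d2 := mul_pos (mul_pos (pow_pos h0 3) (pow_pos h1 2)) (h2)
  linarith [m0, m1, m2, m3, m4, m5, m6, m7, m8, m9, m10, m11, m12, m13, m14, m15, m16, m17, m18, m19, m20, m21, m22, m23, m24, m25, m26, m27, m28, m29, m30, m31, m32, m33, m34, m35, m36, m37, m38, m39, m40, m41, m42, m43, m44, m45, m46, m47, m48, m49, m50, m51, m52, m53, m54, m55, m56, m57, m58, m59, m60, m61, m62, m63, m64, m65, m66, ms]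


private lemma quartic_re_neg (a b c e x y : ℝ) (ha : 0 < a) (hb : 0 < b) (hc : 0 < c) (he : 0 < e)
    (hD : c^2 + a^2*e < a*b*c)
    (h1 : x^4 - 6*x^2*y^2 + y^4 + a*(x^3 - 3*x*y^2) + b*(x^2 - y^2) + c*x + e = 0)
    (h2 : y*(4*x^3 - 4*x*y^2 + a*(3*x^2 - y^2) + 2*b*x + c) = 0) : x < 0 := by
  by_contra hx
  push_neg at hx
  rcases eq_or_ne y 0 with hy | hy
  · subst hy
    nlinarith [pow_nonneg hx 4, pow_nonneg hx 3, pow_nonneg hx 2, mul_nonneg ha.le (pow_nonneg hx 3),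
      mul_nonneg hb.le (pow_nonneg hx 2), mul_nonneg hc.le hx]
  · have h2' : y^2*(4*x+a) = 4*x^3 + 3*a*x^2 + 2*b*x + c := by
      rcases mul_eq_zero.mp h2 with h | h
      · exact absurd h hy
      · nlinarith [h]
    set t := y^2 with ht
    have htpos : 0 < t := by positivity
    have hF : x^4*(4*x+a)^2 - 6*x^2*(4*x^3+3*a*x^2+2*b*x+c)*(4*x+a)
        + (4*x^3+3*a*x^2+2*b*x+c)^2 + a*x^3*(4*x+a)^2
        - 3*a*x*(4*x^3+3*a*x^2+2*b*x+c)*(4*x+a) + b*x^2*(4*x+a)^2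
        - b*(4*x^3+3*a*x^2+2*b*x+c)*(4*x+a) + c*x*(4*x+a)^2 + e*(4*x+a)^2 = 0 := by
      linear_combination (4*x+a)^2 * h1 - (t*(4*x+a) + (4*x^3+3*a*x^2+2*b*x+c)
        - (6*x^2+3*a*x+b)*(4*x+a)) * (h2' - (by ring : (4*x^3+3*a*x^2+2*b*x+c : ℝ) = 4*x^3+3*a*x^2+2*b*x+c))
    have key : 0 < 64*a^2*x^6 + 96*a^3*x^5 + (32*a^2*b+48*a^4)*x^4 + (32*a^3*b+8*a^5)*x^3
        + (4*(a*b-2*c)^2 + 4*a^3*c + 8*a^4*b + 16*(a*b*c - c^2 - a^2*e))*x^2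
        + (2*a*((a*b-2*c)^2 + a^3*c + 4*(a*b*c - c^2 - a^2*e)))*x
        + a^2*(a*b*c - c^2 - a^2*e) := by
      have hDpos : 0 < a*b*c - c^2 - a^2*e := by linarith
      have k1 : 0 ≤ 64*a^2*x^6 := by positivity
      have k2 : 0 ≤ 96*a^3*x^5 := by positivity
      have k3 : 0 ≤ (32*a^2*b+48*a^4)*x^4 := by positivity
      have k4 : 0 ≤ (32*a^3*b+8*a^5)*x^3 := by positivity
      have k5 : 0 ≤ (4*(a*b-2*c)^2 + 4*a^3*c + 8*a^4*b + 16*(a*b*c - c^2 - a^2*e))*x^2 := by positivity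
      have k6 : 0 ≤ (2*a*((a*b-2*c)^2 + a^3*c + 4*(a*b*c - c^2 - a^2*e)))*x := by positivity
      have k7 : 0 < a^2*(a*b*c - c^2 - a^2*e) := by positivity
      linarith
    nlinarith [hF, key]

private lemma quartic_root_re_neg (a b c e : ℝ) (μ : ℂ)
    (ha : 0 < a) (hb : 0 < b) (hc : 0 < c) (he : 0 < e)
    (hD : c^2 + a^2*e < a*b*c)
    (h : μ^4 + (a:ℂ)*μ^3 + (b:ℂ)*μ^2 + (c:ℂ)*μ + (e:ℂ) = 0) : μ.re < 0 := by
  set x := μ.re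
  set y := μ.im
  have hμ : μ = (x:ℂ) + (y:ℂ)*Complex.I := (Complex.re_add_im μ).symm
  rw [hμ] at h
  have key : ((x^4 - 6*x^2*y^2 + y^4 + a*(x^3 - 3*x*y^2) + b*(x^2 - y^2) + c*x + e : ℝ) : ℂ)
      + ((y*(4*x^3 - 4*x*y^2 + a*(3*x^2 - y^2) + 2*b*x + c) : ℝ) : ℂ) * Complex.I = 0 := by
    push_cast
    linear_combination h + (-(6*(x:ℂ)^2*(y:ℂ)^2+3*(a:ℂ)*(x:ℂ)*(y:ℂ)^2+(b:ℂ)*(y:ℂ)^2)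
      - Complex.I*(4*(x:ℂ)*(y:ℂ)^3+(a:ℂ)*(y:ℂ)^3) - (y:ℂ)^4*(Complex.I^2-1)) * Complex.I_sq
  have h1 := congrArg Complex.re key
  simp only [Complex.add_re, Complex.mul_re, Complex.ofReal_re, Complex.ofReal_im,
    Complex.I_re, Complex.I_im, Complex.zero_re] at h1
  have h2 := congrArg Complex.im key
  simp only [Complex.add_im, Complex.mul_im, Complex.ofReal_re, Complex.ofReal_im,
    Complex.I_re, Complex.I_im, Complex.zero_im] at h2
  exact quartic_re_neg a b c e x y ha hb hc he hD (by linarith) (by linarith)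

set_option maxHeartbeats 1000000 in
set_option maxRecDepth 4000 in
/-- For every `q ≥ 0`, the matrix
`[[-1,0,q,2q],[-1,-1,0,0],[-1,-1,-1,0],[-1,-1,-1,-1]]` is D-stable. -/
theorem example_four_by_four_isDStable (q : ℝ) (hq : q ≥ 0) :
    IsDStable !![-1, 0, q, 2*q; -1, -1, 0, 0; -1, -1, -1, 0; -1, -1, -1, -1] := by
  intro d hd μ hμ
  have h0 := hd 0
  have h1 := hd 1
  have h2 := hd 2
  have h3 := hd 3
  -- Step 1: the characteristic determinant vanishes
  have hdet : det (Matrix.diagonal (fun _ => μ) -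
      ((Matrix.diagonal d * !![-1, 0, q, 2*q; -1, -1, 0, 0; -1, -1, -1, 0; -1, -1, -1, -1]).map
        (Complex.ofReal : ℝ → ℂ))) = 0 := by
    rw [spectrum.mem_iff] at hμ
    rw [Matrix.isUnit_iff_isUnit_det, isUnit_iff_ne_zero, not_ne_iff] at hμ
    rw [← hμ]
    congr 1
  -- Step 2: explicit quartic equation
  have hM : Matrix.diagonal (fun _ => μ) -
      ((Matrix.diagonal d * !![-1, 0, q, 2*q; -1, -1, 0, 0; -1, -1, -1, 0; -1, -1, -1, -1]).map
        (Complex.ofReal : ℝ → ℂ)) =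
      !![μ + (d 0 : ℝ), 0, -(d 0 : ℝ)*(q:ℝ), -(d 0:ℝ)*(2*q:ℝ);
         ((d 1 : ℝ):ℂ), μ + (d 1 : ℝ), 0, 0;
         ((d 2 : ℝ):ℂ), ((d 2 : ℝ):ℂ), μ + (d 2 : ℝ), 0;
         ((d 3 : ℝ):ℂ), ((d 3 : ℝ):ℂ), ((d 3 : ℝ):ℂ), μ + (d 3 : ℝ)] := by
    ext i j
    fin_cases i <;> fin_cases j <;>
      simp [Matrix.sub_apply, Matrix.map_apply, Matrix.diagonal_apply, Matrix.mul_apply,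
        Fin.sum_univ_four, Matrix.vecHead, Matrix.vecTail] <;> push_cast <;> ring
  rw [hM, my_det_fin_four] at hdet
  simp at hdet
  have hquart : μ^4 + ((d 0 + d 1 + d 2 + d 3 : ℝ) : ℂ)*μ^3
      + (((d 0*d 1 + d 1*d 2 + d 1*d 3 + d 2*d 3 + (1+q)*(d 0*d 2) + (1+2*q)*(d 0*d 3) : ℝ)) : ℂ)*μ^2
      + (((d 0*d 1*d 2 + d 0*d 1*d 3 + d 1*d 2*d 3 + (1+q)*(d 0*d 2*d 3) : ℝ)) : ℂ)*μ
      + (((d 0*d 1*d 2*d 3 : ℝ)) : ℂ) = 0 := by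
    push_cast at hdet ⊢
    linear_combination hdet
  -- Step 3: coefficient positivity and the Routh–Hurwitz inequality
  have ha : 0 < d 0 + d 1 + d 2 + d 3 := by linarith
  have hq1 : (0:ℝ) < 1 + q := by linarith
  have hq2 : (0:ℝ) < 1 + 2*q := by linarith
  have hb : 0 < d 0*d 1 + d 1*d 2 + d 1*d 3 + d 2*d 3 + (1+q)*(d 0*d 2) + (1+2*q)*(d 0*d 3) := by
    have := mul_pos h0 h1
    have := mul_pos h1 h2
    have := mul_pos h1 h3
    have := mul_pos h2 h3
    have := mul_pos hq1 (mul_pos h0 h2)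
    have := mul_pos hq2 (mul_pos h0 h3)
    linarith
  have hc : 0 < d 0*d 1*d 2 + d 0*d 1*d 3 + d 1*d 2*d 3 + (1+q)*(d 0*d 2*d 3) := by
    have := mul_pos (mul_pos h0 h1) h2
    have := mul_pos (mul_pos h0 h1) h3
    have := mul_pos (mul_pos h1 h2) h3
    have := mul_pos hq1 (mul_pos (mul_pos h0 h2) h3)
    linarith
  have he : 0 < d 0*d 1*d 2*d 3 := mul_pos (mul_pos (mul_pos h0 h1) h2) h3
  have hD := delta_pos (d 0) (d 1) (d 2) (d 3) q h0 h1 h2 h3 hq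
  exact quartic_root_re_neg _ _ _ _ μ ha hb hc he hD hquart
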